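/- Let α > 1 and F = diag(α, 1/α, 1). Among the unit vectors x = (x₁, x₂, 0) ∈ ℝ³ orthogonal to the third coordinate axis, the cosine ⟨x, F x⟩ / ‖F x‖ of the angle between x and F x attains its minimum exactly at those x with x₂² = α² · x₁² (equivalently x₂² = α²/(1+α²)), and for every such minimizer one additionally has ‖F x‖ = ‖x‖ = 1. In other words, the directions of maximum tangential strain coincide with the initial directions of no distortion. -/

import Mathlib

set_option maxHeartbeats 1000000

private lemma ratio_core (α v : ℝ) (hα : 1 < α) (hv0 : 0 ≤ v) (hv1 : v ≤ 1) :
    2*α/(1+α^2) ≤ (α*(1-v) + α⁻¹*v) / Real.sqrt (α^2*(1-v) + (α⁻¹)^2*v)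
    ∧ ((α*(1-v) + α⁻¹*v) / Real.sqrt (α^2*(1-v) + (α⁻¹)^2*v) ≤ 2*α/(1+α^2) → v = α^2*(1-v))
    ∧ (v = α^2*(1-v) → α^2*(1-v) + (α⁻¹)^2*v = 1)
    ∧ (v = α^2*(1-v) →
        (α*(1-v) + α⁻¹*v) / Real.sqrt (α^2*(1-v) + (α⁻¹)^2*v) = 2*α/(1+α^2)) := by
  have hα0 : 0 < α := lt_trans one_pos hα
  have hαne : α ≠ 0 := ne_of_gt hα0
  have hA0 : 0 < α⁻¹ := inv_pos.mpr hα0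
  have hA1 : α⁻¹ < 1 := by rw [inv_lt_one_iff₀]; right; exact hα
  have h1p : (0:ℝ) < 1 + α^2 := by positivity
  have hD : 0 < α^2*(1-v) + (α⁻¹)^2*v := by
    have h2 : (α⁻¹)^2 ≤ α^2 := by nlinarith
    have h3 : (α⁻¹)^2*(1-v) ≤ α^2*(1-v) :=
      mul_le_mul_of_nonneg_right h2 (by linarith)
    have h4 : (α⁻¹)^2*(1-v) + (α⁻¹)^2*v = (α⁻¹)^2 := by ring
    nlinarith [pow_pos hA0 2]
  have hN : 0 < α*(1-v) + α⁻¹*v := by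
    have h3 : α⁻¹*(1-v) ≤ α*(1-v) :=
      mul_le_mul_of_nonneg_right (by linarith) (by linarith)
    have h4 : α⁻¹*(1-v) + α⁻¹*v = α⁻¹ := by ring
    nlinarith
  have hsD : 0 < Real.sqrt (α^2*(1-v) + (α⁻¹)^2*v) := Real.sqrt_pos.mpr hD
  have hsq : (Real.sqrt (α^2*(1-v) + (α⁻¹)^2*v))^2 = α^2*(1-v) + (α⁻¹)^2*v :=
    Real.sq_sqrt hD.le
  have hid : (1+α^2)^2*α^2*(α*(1-v) + α⁻¹*v)^2 - 4*α^4*(α^2*(1-v) + (α⁻¹)^2*v)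
      = (α^2-1)^2*(v-α^2*(1-v))^2 := by
    field_simp
    ring
  have hc0 : 0 < 2*α/(1+α^2) := by positivity
  have hcsq : (2*α/(1+α^2))^2 = 4*α^2/(1+α^2)^2 := by
    rw [div_pow]; congr 1; ring
  have hge : 2*α/(1+α^2) ≤ (α*(1-v) + α⁻¹*v) / Real.sqrt (α^2*(1-v) + (α⁻¹)^2*v) := by
    rw [le_div_iff₀ hsD]
    have h2 : (2*α/(1+α^2) * Real.sqrt (α^2*(1-v) + (α⁻¹)^2*v))^2
        ≤ (α*(1-v) + α⁻¹*v)^2 := by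
      rw [mul_pow, hsq, hcsq, div_mul_eq_mul_div, div_le_iff₀ (by positivity)]
      nlinarith [hid, pow_pos hα0 2, sq_nonneg (v-α^2*(1-v)),
        mul_nonneg (sq_nonneg (α^2-1)) (sq_nonneg (v-α^2*(1-v)))]
    calc 2*α/(1+α^2) * Real.sqrt (α^2*(1-v) + (α⁻¹)^2*v)
        = Real.sqrt ((2*α/(1+α^2) * Real.sqrt (α^2*(1-v) + (α⁻¹)^2*v))^2) :=
          (Real.sqrt_sq (by positivity)).symm
      _ ≤ Real.sqrt ((α*(1-v) + α⁻¹*v)^2) := Real.sqrt_le_sqrt h2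
      _ = α*(1-v) + α⁻¹*v := Real.sqrt_sq hN.le
  have part3 : v = α^2*(1-v) → α^2*(1-v) + (α⁻¹)^2*v = 1 := by
    intro h
    have hv' : v = α^2/(1+α^2) := by
      rw [eq_div_iff (ne_of_gt h1p)]; ring_nf; ring_nf at h; linarith
    rw [hv']
    field_simp
    ring
  refine ⟨hge, ?_, part3, ?_⟩
  · intro hle
    have heq : (α*(1-v) + α⁻¹*v) / Real.sqrt (α^2*(1-v) + (α⁻¹)^2*v) = 2*α/(1+α^2) :=
      le_antisymm hle hge
    have hNe : α*(1-v) + α⁻¹*v = 2*α/(1+α^2) * Real.sqrt (α^2*(1-v) + (α⁻¹)^2*v) := by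
      rw [div_eq_iff (ne_of_gt hsD)] at heq
      linarith [heq]
    have h0 : (α^2-1)^2*(v-α^2*(1-v))^2 = 0 := by
      rw [← hid, hNe, mul_pow, hsq, hcsq]
      field_simp
      ring
    have hne : (α^2-1)^2 ≠ 0 := pow_ne_zero 2 (by nlinarith)
    have h1 : (v-α^2*(1-v))^2 = 0 := by
      rcases mul_eq_zero.mp h0 with h | h
      · exact absurd h hne
      · exact h
    have h2 : v - α^2*(1-v) = 0 := by
      exact pow_eq_zero_iff two_ne_zero |>.mp h1
    linarith
  · intro h
    have hD1 : α^2*(1-v) + (α⁻¹)^2*v = 1 := part3 h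
    rw [hD1, Real.sqrt_one, div_one]
    have hv' : v = α^2/(1+α^2) := by
      rw [eq_div_iff (ne_of_gt h1p)]; ring_nf; ring_nf at h; linarith
    rw [hv']
    field_simp
    ring

open Matrix

private lemma Fdiag_apply (α : ℝ) (y : EuclideanSpace ℝ (Fin 3)) (i : Fin 3) :
    (Matrix.toEuclideanLin (Matrix.diagonal ![α, α⁻¹, 1]) y) i = ![α, α⁻¹, 1] i * y i := by
  show (Matrix.diagonal ![α, α⁻¹, 1] *ᵥ _) i = _
  rw [Matrix.mulVec_diagonal]
  rfl

private lemma inner_diag (α : ℝ) (y : EuclideanSpace ℝ (Fin 3)) (hy3 : y 2 = 0) :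
    (inner ℝ y (Matrix.toEuclideanLin (Matrix.diagonal ![α, α⁻¹, 1]) y) : ℝ)
      = α * (y 0)^2 + α⁻¹ * (y 1)^2 := by
  rw [PiLp.inner_apply]
  rw [Fin.sum_univ_three, Fdiag_apply, Fdiag_apply, Fdiag_apply, hy3]
  simp [RCLike.inner_apply]
  ring

private lemma norm_diag (α : ℝ) (y : EuclideanSpace ℝ (Fin 3)) (hy3 : y 2 = 0) :
    ‖Matrix.toEuclideanLin (Matrix.diagonal ![α, α⁻¹, 1]) y‖
      = Real.sqrt (α^2 * (y 0)^2 + (α⁻¹)^2 * (y 1)^2) := by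
  rw [EuclideanSpace.norm_eq, Fin.sum_univ_three, Fdiag_apply, Fdiag_apply, Fdiag_apply, hy3]
  simp [mul_pow, sq_abs, abs_inv]

private lemma sum_sq (y : EuclideanSpace ℝ (Fin 3)) (hy : ‖y‖ = 1) (hy3 : y 2 = 0) :
    (y 0)^2 + (y 1)^2 = 1 := by
  have h : ‖y‖^2 = 1 := by rw [hy]; norm_num
  rw [EuclideanSpace.norm_eq, Real.sq_sqrt (by positivity)] at h
  rw [Fin.sum_univ_three, hy3] at h
  simpa [sq_abs] using h

theorem max_tangential_strain_iff_no_distortion (α : ℝ) (hα : 1 < α)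
    (x : EuclideanSpace ℝ (Fin 3)) (hx : ‖x‖ = 1) (hx3 : x 2 = 0) :
    ((∀ y : EuclideanSpace ℝ (Fin 3), ‖y‖ = 1 → y 2 = 0 →
        (inner ℝ x (Matrix.toEuclideanLin (Matrix.diagonal ![α, α⁻¹, 1]) x) : ℝ) /
            ‖Matrix.toEuclideanLin (Matrix.diagonal ![α, α⁻¹, 1]) x‖ ≤
          (inner ℝ y (Matrix.toEuclideanLin (Matrix.diagonal ![α, α⁻¹, 1]) y) : ℝ) /
            ‖Matrix.toEuclideanLin (Matrix.diagonal ![α, α⁻¹, 1]) y‖)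
      ↔ (x 1) ^ 2 = α ^ 2 * (x 0) ^ 2)
    ∧ ((x 1) ^ 2 = α ^ 2 * (x 0) ^ 2 ↔ (x 1) ^ 2 = α ^ 2 / (1 + α ^ 2))
    ∧ ((x 1) ^ 2 = α ^ 2 * (x 0) ^ 2 →
        ‖Matrix.toEuclideanLin (Matrix.diagonal ![α, α⁻¹, 1]) x‖ = 1) := by
  have h1p : (0:ℝ) < 1 + α^2 := by positivity
  have hxsum := sum_sq x hx hx3
  have hx0 : (x 0)^2 = 1 - (x 1)^2 := by linarith
  -- ratio formula
  have hratio : ∀ y : EuclideanSpace ℝ (Fin 3), ‖y‖ = 1 → y 2 = 0 →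
      (inner ℝ y (Matrix.toEuclideanLin (Matrix.diagonal ![α, α⁻¹, 1]) y) : ℝ) /
          ‖Matrix.toEuclideanLin (Matrix.diagonal ![α, α⁻¹, 1]) y‖
        = (α*(1-(y 1)^2) + α⁻¹*(y 1)^2) / Real.sqrt (α^2*(1-(y 1)^2) + (α⁻¹)^2*(y 1)^2) := by
    intro y hy hy3
    have hysum := sum_sq y hy hy3
    have hy0 : (y 0)^2 = 1 - (y 1)^2 := by linarith
    rw [inner_diag α y hy3, norm_diag α y hy3, hy0]
  have hvbd : ∀ y : EuclideanSpace ℝ (Fin 3), ‖y‖ = 1 → y 2 = 0 →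
      0 ≤ (y 1)^2 ∧ (y 1)^2 ≤ 1 := by
    intro y hy hy3
    have hysum := sum_sq y hy hy3
    exact ⟨sq_nonneg _, by nlinarith [sq_nonneg (y 0)]⟩
  -- minimizer y₀
  set a := Real.sqrt (1/(1+α^2)) with ha
  set b := Real.sqrt (α^2/(1+α^2)) with hb
  have ha2 : a^2 = 1/(1+α^2) := Real.sq_sqrt (by positivity)
  have hb2 : b^2 = α^2/(1+α^2) := Real.sq_sqrt (by positivity)
  set y₀ : EuclideanSpace ℝ (Fin 3) := (WithLp.equiv 2 (Fin 3 → ℝ)).symm ![a, b, 0] with hy₀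
  have hy₀app : ∀ i, y₀ i = ![a, b, 0] i := fun i => rfl
  have hy₀3 : y₀ 2 = 0 := rfl
  have hy₀norm : ‖y₀‖ = 1 := by
    rw [EuclideanSpace.norm_eq, Fin.sum_univ_three, hy₀app, hy₀app, hy₀app]
    show Real.sqrt (‖a‖^2 + ‖b‖^2 + ‖(0:ℝ)‖^2) = 1
    rw [Real.norm_eq_abs, Real.norm_eq_abs, sq_abs, sq_abs, ha2, hb2]
    have hz : 1/(1+α^2) + α^2/(1+α^2) + ‖(0:ℝ)‖^2 = 1 := by
      rw [norm_zero]; field_simp; norm_num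
    rw [hz]; exact Real.sqrt_one
  have hy₀1 : (y₀ 1)^2 = α^2*(1-(y₀ 1)^2) := by
    show b^2 = α^2*(1-b^2)
    rw [hb2]; field_simp; ring
  -- core facts
  have hcore := fun (v : ℝ) (hv0 : 0 ≤ v) (hv1 : v ≤ 1) => ratio_core α v hα hv0 hv1
  refine ⟨?_, ?_, ?_⟩
  · constructor
    · intro hmin
      have hb01 := hvbd y₀ hy₀norm hy₀3
      have hx01 := hvbd x hx hx3
      have h1 := hmin y₀ hy₀norm hy₀3
      rw [hratio x hx hx3, hratio y₀ hy₀norm hy₀3] at h1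
      have h2 := (hcore ((y₀ 1)^2) hb01.1 hb01.2).2.2.2 hy₀1
      rw [h2] at h1
      have h3 := (hcore ((x 1)^2) hx01.1 hx01.2).2.1 h1
      rw [hx0]
      exact h3
    · intro hcond y hy hy3
      have hx01 := hvbd x hx hx3
      have hy01 := hvbd y hy hy3
      rw [hratio x hx hx3, hratio y hy hy3]
      have hx1 : (x 1)^2 = α^2*(1-(x 1)^2) := by rw [hx0] at hcond; exact hcond
      rw [(hcore ((x 1)^2) hx01.1 hx01.2).2.2.2 hx1]
      exact (hcore ((y 1)^2) hy01.1 hy01.2).1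
  · rw [hx0]
    constructor
    · intro h
      rw [eq_div_iff (ne_of_gt h1p)]
      ring_nf; ring_nf at h; linarith
    · intro h
      rw [h]; field_simp; ring
  · intro hcond
    have hx01 := hvbd x hx hx3
    have hx1 : (x 1)^2 = α^2*(1-(x 1)^2) := by rw [hx0] at hcond; exact hcond
    rw [norm_diag α x hx3, hx0, (hcore ((x 1)^2) hx01.1 hx01.2).2.2.1 hx1]
    exact Real.sqrt_one
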